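/- The map u(x) = (a, b) with a = ⌊(−(2n+1) + √(4n² − 4n − 8x + 1))/(−2)⌋ and b = (a+1) + x − (a−1)(2n−a)/2 maps the linear thread index x, for 0 ≤ x < n(n−1)/2, into the strictly upper triangular region: 1 ≤ a < b ≤ n. -/

import Mathlib

set_option maxHeartbeats 1600000 in
/-- the UTM map of Avril et al. sends each linear thread index
x ∈ [0, n(n−1)/2) into the strictly upper triangular region 1 ≤ a < b ≤ n. -/
theorem utm_map_upper_triangular (n : ℕ) (hn : 2 ≤ n) (x : ℕ)
    (hx : x < n*(n-1)/2) :
    let a : ℤ := ⌊(-(2*(n:ℝ) + 1) + Real.sqrt (4*(n:ℝ)^2 - 4*n - 8*x + 1)) / (-2)⌋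
    let b : ℝ := ((a:ℝ) + 1) + x - ((a:ℝ) - 1)*(2*n - (a:ℝ))/2
    1 ≤ (a:ℝ) ∧ (a:ℝ) < b ∧ b ≤ n := by
  intro a b
  set N : ℝ := (n : ℝ) with hN
  have hn2 : (2:ℝ) ≤ N := by rw [hN]; exact_mod_cast hn
  -- From x < n*(n-1)/2 (nat division exact since n*(n-1) even):
  have hxx : 2*x + 2 ≤ n*(n-1) := by
    have h1 : 2*(x+1) ≤ 2*(n*(n-1)/2) := by omega
    have h2 : 2*(n*(n-1)/2) ≤ n*(n-1) := Nat.mul_div_le _ 2 |>.trans_eq rfl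
    omega
  have hxR : 2*(x:ℝ) + 2 ≤ N*(N-1) := by
    have h1 : ((2*x + 2 : ℕ) : ℝ) ≤ ((n*(n-1) : ℕ) : ℝ) := by exact_mod_cast hxx
    push_cast [Nat.cast_sub (by omega : 1 ≤ n)] at h1
    linarith
  have hx0 : (0:ℝ) ≤ (x:ℝ) := Nat.cast_nonneg x
  set D : ℝ := 4*N^2 - 4*N - 8*(x:ℝ) + 1 with hD
  have hDeq : D = (2*N-1)^2 - 8*(x:ℝ) := by rw [hD]; ring
  have hD9 : 9 ≤ D := by rw [hDeq]; nlinarith [hxR]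
  have hDle : D ≤ (2*N-1)^2 := by rw [hDeq]; linarith
  set s : ℝ := Real.sqrt D with hs
  have hs0 : 0 ≤ s := Real.sqrt_nonneg D
  have hs2 : s^2 = D := Real.sq_sqrt (by linarith)
  have hs3 : 3 ≤ s := by nlinarith
  have hsle : s ≤ 2*N - 1 := by nlinarith
  have ha : a = ⌊(2*N + 1 - s)/2⌋ := by
    have : (-(2*N + 1) + s) / (-2) = (2*N + 1 - s)/2 := by ring
    simp only [a, hN, hs, hD, this]
    congr 1
  have hfl : (a:ℝ) ≤ (2*N + 1 - s)/2 := by rw [ha]; exact Int.floor_le _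
  have hfu : (2*N + 1 - s)/2 < (a:ℝ) + 1 := by rw [ha]; exact Int.lt_floor_add_one _
  have ha1 : (1:ℝ) ≤ (a:ℝ) := by
    rw [ha]
    have : (1:ℤ) ≤ ⌊(2*N + 1 - s)/2⌋ := by
      apply Int.le_floor.2; push_cast; linarith
    exact_mod_cast this
  have haN : (a:ℝ) ≤ N - 1 := by linarith
  have hb : b = ((a:ℝ) + 1) + x - ((a:ℝ) - 1)*(2*N - (a:ℝ))/2 := rfl
  refine ⟨ha1, ?_, ?_⟩
  · -- a < b, i.e. (a-1)(2n-a)/2 ≤ x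
    have h1 : s ≤ 2*N + 1 - 2*(a:ℝ) := by linarith
    have key : (0:ℝ) ≤ (2*N + 1 - 2*(a:ℝ) - s) * (2*N + 1 - 2*(a:ℝ) + s) :=
      mul_nonneg (by linarith) (by linarith)
    rw [hb]
    nlinarith [key, hs2, hDeq]
  · -- b ≤ n, i.e. 2x + 2 ≤ a(2n-1-a)
    have h1 : 2*N - 1 - 2*(a:ℝ) < s := by linarith
    have h2 : (0:ℝ) ≤ 2*N - 1 - 2*(a:ℝ) := by linarith
    have hxR2 : 2*(x:ℝ) < (a:ℝ)*(2*N - 1 - (a:ℝ)) := by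
      have hkey : (2*N - 1 - 2*(a:ℝ))^2 < s^2 := by
        apply pow_lt_pow_left₀ h1 h2
        norm_num
      nlinarith [hs2, hDeq, hkey]
    have hxZ : 2*(x:ℤ) < a*(2*(n:ℤ) - 1 - a) := by
      have : (2*(x:ℝ)) < (((a*(2*(n:ℤ) - 1 - a)) : ℤ) : ℝ) := by push_cast; linarith [hxR2]
      exact_mod_cast this
    have hpar : 2 ∣ a*(2*(n:ℤ) - 1 - a) := by
      rcases Int.even_or_odd a with ⟨r, hr⟩ | ⟨r, hr⟩
      · exact ⟨r*(2*(n:ℤ) - 1 - a), by rw [hr]; ring⟩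
      · exact ⟨a*((n:ℤ) - 1 - r), by rw [hr]; ring⟩
    have hxZ2 : 2*(x:ℤ) + 2 ≤ a*(2*(n:ℤ) - 1 - a) := by
      obtain ⟨k, hk⟩ := hpar; omega
    have hxR3 : 2*(x:ℝ) + 2 ≤ (a:ℝ)*(2*N - 1 - (a:ℝ)) := by
      have : ((2*(x:ℤ) + 2 : ℤ) : ℝ) ≤ (((a*(2*(n:ℤ) - 1 - a)) : ℤ) : ℝ) := by
        exact_mod_cast hxZ2
      push_cast at this; linarith
    rw [hb]
    have hgoal : ((a:ℝ) + 1) + x - ((a:ℝ) - 1)*(2*N - (a:ℝ))/2 ≤ N := by linarith [hxR3]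
    exact hgoal
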